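/- Let n, r ≥ 1 be integers and α_1, ..., α_{r+1} positive reals with ∑ α_i = n. Then for any ℓ ≥ 2 and positive reals x_1, ..., x_ℓ, the function Q(x) = Γ(xn + 1)/∏_{i=1}^{r+1} Γ(x α_i + 1) satisfies ∏_{k=1}^ℓ Q(x_k) < Q(∑_{k=1}^ℓ x_k). -/

import Mathlib

open Real MeasureTheory Filter Topology Finset Set
open scoped ENNReal NNReal

namespace Stmt17


/-- slope inequality for exp from strict convexity -/
lemma exp_slope {p q : ℝ} (hp : 0 < p) (hpq : p < q) :
    q * (Real.exp p - 1) < p * (Real.exp q - 1) := by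
  have hq : 0 < q := hp.trans hpq
  have h := strictConvexOn_exp.2 (Set.mem_univ (0:ℝ)) (Set.mem_univ q)
      (ne_of_lt hq)
      (show (0:ℝ) < 1 - p/q by rw [sub_pos]; exact (div_lt_one hq).mpr hpq)
      (show (0:ℝ) < p/q by positivity)
      (show (1 - p/q) + p/q = 1 by ring)
  simp only [smul_eq_mul, mul_zero, zero_add, Real.exp_zero] at h
  have h2 : p / q * q = p := div_mul_cancel₀ p (ne_of_gt hq)
  rw [h2] at h
  have h3 : Real.exp p - 1 < p/q * (Real.exp q - 1) := by nlinarith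
  calc q * (Real.exp p - 1) < q * (p/q * (Real.exp q - 1)) :=
        mul_lt_mul_of_pos_left h3 hq
    _ = p * (Real.exp q - 1) := by field_simp

lemma exp_sub_one_pos {p : ℝ} (hp : 0 < p) : 0 < Real.exp p - 1 := by
  have := Real.exp_lt_exp.mpr hp
  simp only [Real.exp_zero] at this
  linarith

/-- λ/(e^λ - 1) is strictly decreasing -/
lemma phi_lt {p q : ℝ} (hp : 0 < p) (hpq : p < q) :
    q / (Real.exp q - 1) < p / (Real.exp p - 1) := by
  rw [div_lt_div_iff₀ (exp_sub_one_pos (hp.trans hpq)) (exp_sub_one_pos hp)]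
  exact exp_slope hp hpq

lemma Hfun_eq {t w : ℝ} (ht : 0 < t) (hw : 0 < w) :
    1 / (Real.exp (w/t) - 1) = t * ((w/t) / (Real.exp (w/t) - 1)) / w := by
  have h := exp_sub_one_pos (div_pos hw ht)
  field_simp

/-- strict superadditivity of t ↦ 1/(exp(w/t)-1) -/
lemma H_superadd {w x y : ℝ} (hw : 0 < w) (hx : 0 < x) (hy : 0 < y) :
    1 / (Real.exp (w / x) - 1) + 1 / (Real.exp (w / y) - 1)
      < 1 / (Real.exp (w / (x + y)) - 1) := by
  have hxy : 0 < x + y := by linarith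
  have hsp : 0 < w / (x + y) := div_pos hw hxy
  have h1 : w / (x + y) < w / x := div_lt_div_of_pos_left hw hx (by linarith)
  have h2 : w / (x + y) < w / y := div_lt_div_of_pos_left hw hy (by linarith)
  have p1 := phi_lt hsp h1
  have p2 := phi_lt hsp h2
  rw [Hfun_eq hx hw, Hfun_eq hy hw, Hfun_eq hxy hw, ← add_div,
    div_lt_div_iff_of_pos_right hw]
  nlinarith

/-- products bound for 1 + sum -/
lemma one_add_sum_le_prod {ι : Type*} (s : Finset ι) (f : ι → ℝ)
    (hf : ∀ i ∈ s, 0 ≤ f i) :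
    1 + ∑ i ∈ s, f i ≤ ∏ i ∈ s, (1 + f i) := by
  classical
  induction s using Finset.induction with
  | empty => simp
  | insert _ _ hnotmem ih =>
    rename_i a s'
    rw [Finset.sum_insert hnotmem, Finset.prod_insert hnotmem]
    have ha : 0 ≤ f a := hf a (Finset.mem_insert_self a s')
    have hs : ∀ i ∈ s', 0 ≤ f i := fun i hi => hf i (Finset.mem_insert_of_mem hi)
    have ih' := ih hs
    have hsum : 0 ≤ ∑ i ∈ s', f i := Finset.sum_nonneg hs
    nlinarith

/-- subadditivity of s ↦ 1 - exp (-(s*w)) over finsets -/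
lemma one_sub_exp_sum {ι : Type*} (w : ℝ) (s : Finset ι) (f : ι → ℝ)
    (ha : ∀ i ∈ s, 0 ≤ f i * w) :
    1 - Real.exp (-((∑ i ∈ s, f i) * w)) ≤ ∑ i ∈ s, (1 - Real.exp (-(f i * w))) := by
  classical
  induction s using Finset.induction with
  | empty => simp
  | insert _ _ hnotmem ih =>
    rename_i j s'
    rw [Finset.sum_insert hnotmem, Finset.sum_insert hnotmem]
    have hb : 0 ≤ f j * w := ha j (Finset.mem_insert_self j s')
    have hs : ∀ i ∈ s', 0 ≤ f i * w := fun i hi => ha i (Finset.mem_insert_of_mem hi)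
    have ih' := ih hs
    have hsw : 0 ≤ (∑ i ∈ s', f i) * w := by
      rw [Finset.sum_mul]; exact Finset.sum_nonneg fun i hi => hs i hi
    have key : 1 - Real.exp (-((f j + ∑ i ∈ s', f i) * w)) ≤
        (1 - Real.exp (-(f j * w))) + (1 - Real.exp (-((∑ i ∈ s', f i) * w))) := by
      have hprod : 0 ≤ (1 - Real.exp (-(f j * w))) * (1 - Real.exp (-((∑ i ∈ s', f i) * w))) := by
        apply mul_nonneg <;>
        · rw [sub_nonneg, ← Real.exp_zero]
          exact Real.exp_le_exp.mpr (by linarith)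
      have hadd : Real.exp (-((f j + ∑ i ∈ s', f i) * w)) =
          Real.exp (-(f j * w)) * Real.exp (-((∑ i ∈ s', f i) * w)) := by
        rw [← Real.exp_add]; ring_nf
      nlinarith
    linarith



lemma tendsto_logGS (s : ℝ) (hs : 0 < s) :
    Tendsto (fun N : ℕ => s * Real.log N + Real.log (Nat.factorial N) -
      ∑ j ∈ Finset.range (N+1), Real.log (s + j)) atTop
      (𝓝 (Real.log (Real.Gamma s))) := by
  have h1 : Tendsto (fun N => Real.log (Real.GammaSeq s N)) atTop
      (𝓝 (Real.log (Real.Gamma s))) :=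
    ((Real.continuousAt_log (Real.Gamma_pos_of_pos hs).ne').tendsto).comp
      (Real.GammaSeq_tendsto_Gamma s)
  apply h1.congr'
  filter_upwards [eventually_ge_atTop 1] with N hN
  have hNpos : (0:ℝ) < N := by exact_mod_cast hN
  have hfac : (0:ℝ) < (N.factorial : ℝ) := by exact_mod_cast N.factorial_pos
  have hprodpos : 0 < ∏ j ∈ Finset.range (N+1), (s + (j:ℝ)) :=
    Finset.prod_pos fun j _ => by positivity
  have hrpow : (0:ℝ) < (N:ℝ) ^ s := Real.rpow_pos_of_pos hNpos s
  have hnum : (0:ℝ) < (N:ℝ) ^ s * N.factorial := mul_pos hrpow hfac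
  unfold Real.GammaSeq
  rw [Real.log_div hnum.ne' hprodpos.ne',
    Real.log_mul hrpow.ne' hfac.ne', Real.log_rpow hNpos,
    Real.log_prod (fun j _ => by positivity)]


noncomputable def Flog {r : ℕ} (α : Fin (r+1) → ℝ) (ν : ℝ) (t : ℝ) : ℝ :=
  Real.log (Real.Gamma (t*ν+1)) - ∑ i, Real.log (Real.Gamma (t*α i+1))
section

variable {r : ℕ} (α : Fin (r+1) → ℝ) (ν t : ℝ)

/-- the m-th term of the log-multinomial series (index shifted by 1). -/
noncomputable def eterm (m : ℕ) : ℝ :=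
  (∑ i, Real.log (1 + t * α i / ((m:ℝ) + 1))) - Real.log (1 + t * ν / ((m:ℝ) + 1))

variable {α ν t}

lemma eterm_nonneg (hα : ∀ i, 0 < α i) (hν : ∑ i, α i = ν) (ht : 0 < t) (m : ℕ) :
    0 ≤ eterm α ν t m := by
  have hm : (0:ℝ) < (m:ℝ) + 1 := by positivity
  have hf : ∀ i : Fin (r+1), 0 ≤ t * α i / ((m:ℝ)+1) := fun i => by
    have := hα i; positivity
  have hsum : ∑ i : Fin (r+1), t * α i / ((m:ℝ)+1) = t * ν / ((m:ℝ)+1) := by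
    rw [← Finset.sum_div, ← Finset.mul_sum, hν]
  have hle : 1 + t * ν / ((m:ℝ)+1) ≤ ∏ i, (1 + t * α i / ((m:ℝ)+1)) := by
    rw [← hsum]; exact one_add_sum_le_prod _ _ (fun i _ => hf i)
  have hpos : (0:ℝ) < 1 + t * ν / ((m:ℝ)+1) := by
    have : 0 < ν := by rw [← hν]; exact Finset.sum_pos (fun i _ => hα i) univ_nonempty
    positivity
  have hlog := Real.log_le_log hpos hle
  rw [Real.log_prod (fun i _ => by have := hf i; positivity)] at hlog
  unfold eterm
  linarith

lemma eterm_eq (hα : ∀ i, 0 < α i) (hν : ∑ i, α i = ν) (ht : 0 < t) (j : ℕ) :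
    eterm α ν t j = (∑ i, Real.log ((t * α i + 1) + j)) - Real.log ((t * ν + 1) + j)
      - (r : ℝ) * Real.log ((j:ℝ) + 1) := by
  have hνpos : 0 < ν := by rw [← hν]; exact Finset.sum_pos (fun i _ => hα i) univ_nonempty
  have hj : (0:ℝ) < (j:ℝ) + 1 := by positivity
  have key : ∀ β : ℝ, 0 < β →
      Real.log (1 + t * β / ((j:ℝ)+1)) = Real.log ((t * β + 1) + j) - Real.log ((j:ℝ)+1) := by
    intro β hβ
    have h1 : 1 + t * β / ((j:ℝ)+1) = ((t * β + 1) + j) / ((j:ℝ)+1) := by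
      field_simp; ring
    have h2 : (0:ℝ) < (t * β + 1) + j := by positivity
    rw [h1, Real.log_div h2.ne' hj.ne']
  unfold eterm
  rw [key ν hνpos, Finset.sum_congr rfl (fun i _ => key (α i) (hα i))]
  rw [Finset.sum_sub_distrib]
  simp [Finset.card_univ, mul_comm]
  ring

lemma partial_sum_eterm (hα : ∀ i, 0 < α i) (hν : ∑ i, α i = ν) (ht : 0 < t) (N : ℕ) :
    ∑ j ∈ Finset.range (N+1), eterm α ν t j =
      ((t*ν+1) * Real.log N + Real.log (Nat.factorial N)
          - ∑ j ∈ Finset.range (N+1), Real.log ((t*ν+1) + j))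
      - ∑ i, ((t*α i+1) * Real.log N + Real.log (Nat.factorial N)
          - ∑ j ∈ Finset.range (N+1), Real.log ((t*α i+1) + j))
      + (r:ℝ) * (Real.log N - Real.log ((N:ℝ)+1)) := by
  have hfac : ∑ j ∈ Finset.range (N+1), Real.log ((j:ℝ)+1)
      = Real.log ((N:ℝ)+1) + Real.log (Nat.factorial N) := by
    rw [← Real.log_prod (fun j _ => by positivity)]
    have hprod : ∏ j ∈ Finset.range (N+1), ((j:ℝ)+1) = ((Nat.factorial (N+1) : ℕ) : ℝ) := by
      rw [← Finset.prod_range_add_one_eq_factorial]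
      push_cast
      rfl
    rw [hprod, Nat.factorial_succ]
    push_cast
    rw [Real.log_mul (by positivity) (by exact_mod_cast (Nat.cast_pos.mpr N.factorial_pos).ne')]
  have hsum_coef : ∑ i : Fin (r+1), (t * α i + 1) = t * ν + ((r:ℝ) + 1) := by
    rw [Finset.sum_add_distrib, ← Finset.mul_sum, hν]
    simp [Finset.card_univ]
  -- expand the i-sum on the RHS
  have hexp : ∑ i, ((t*α i+1) * Real.log N + Real.log (Nat.factorial N)
          - ∑ j ∈ Finset.range (N+1), Real.log ((t*α i+1) + j))
      = (t * ν + ((r:ℝ)+1)) * Real.log N + ((r:ℝ)+1) * Real.log (Nat.factorial N)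
          - ∑ i, ∑ j ∈ Finset.range (N+1), Real.log ((t*α i+1) + j) := by
    rw [Finset.sum_sub_distrib, Finset.sum_add_distrib, ← Finset.sum_mul, hsum_coef]
    simp [Finset.card_univ]
    try ring
  have hLHS : ∑ j ∈ Finset.range (N+1), eterm α ν t j
      = (∑ i, ∑ j ∈ Finset.range (N+1), Real.log ((t*α i+1) + j))
        - (∑ j ∈ Finset.range (N+1), Real.log ((t*ν+1) + j))
        - (r:ℝ) * (Real.log ((N:ℝ)+1) + Real.log (Nat.factorial N)) := by
    rw [Finset.sum_congr rfl (fun j _ => eterm_eq hα hν ht j)]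
    rw [Finset.sum_sub_distrib, Finset.sum_sub_distrib, ← Finset.mul_sum, hfac,
      Finset.sum_comm]
  rw [hLHS, hexp]
  ring

lemma tendsto_log_ratio : Tendsto (fun N : ℕ => Real.log ((N:ℝ)) - Real.log ((N:ℝ)+1))
    atTop (𝓝 0) := by
  have h1 : Tendsto (fun N : ℕ => 1 + 1/(N:ℝ)) atTop (𝓝 1) := by
    have := (tendsto_one_div_atTop_nhds_zero_nat (𝕜 := ℝ)).const_add 1
    simpa using this
  have h2 : Tendsto (fun N : ℕ => Real.log (1 + 1/(N:ℝ))) atTop (𝓝 0) := by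
    have hc : ContinuousAt Real.log 1 := Real.continuousAt_log one_ne_zero
    have := hc.tendsto.comp h1
    simpa [Function.comp_def] using this
  have h3 := h2.neg
  rw [neg_zero] at h3
  apply h3.congr'
  filter_upwards [eventually_ge_atTop 1] with N hN
  have hNpos : (0:ℝ) < N := by exact_mod_cast hN
  have : 1 + 1/(N:ℝ) = ((N:ℝ)+1)/N := by field_simp
  rw [this, Real.log_div (by positivity) hNpos.ne']
  ring

lemma hasSum_eterm {r : ℕ} {α : Fin (r+1) → ℝ} {ν t : ℝ}
    (hα : ∀ i, 0 < α i) (hν : ∑ i, α i = ν) (ht : 0 < t) :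
    HasSum (eterm α ν t) (Flog α ν t) := by
  unfold Flog
  have hνpos : 0 < ν := by rw [← hν]; exact Finset.sum_pos (fun i _ => hα i) univ_nonempty
  rw [hasSum_iff_tendsto_nat_of_nonneg (fun m => eterm_nonneg hα hν ht m)]
  rw [← tendsto_add_atTop_iff_nat 1]
  have hmain : Tendsto (fun N : ℕ =>
      ((t*ν+1) * Real.log N + Real.log (Nat.factorial N)
          - ∑ j ∈ Finset.range (N+1), Real.log ((t*ν+1) + j))
      - ∑ i, ((t*α i+1) * Real.log N + Real.log (Nat.factorial N)
          - ∑ j ∈ Finset.range (N+1), Real.log ((t*α i+1) + j))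
      + (r:ℝ) * (Real.log N - Real.log ((N:ℝ)+1))) atTop
      (𝓝 ((Real.log (Real.Gamma (t*ν+1)) - ∑ i, Real.log (Real.Gamma (t*α i+1))) + (r:ℝ) * 0)) := by
    apply Tendsto.add
    · exact (tendsto_logGS _ (by positivity)).sub
        (tendsto_finset_sum _ (fun i _ => tendsto_logGS _ (by have := hα i; positivity)))
    · exact tendsto_log_ratio.const_mul _
  rw [mul_zero, add_zero] at hmain
  exact hmain.congr (fun N => (partial_sum_eterm hα hν ht N).symm)

end


lemma integral_exp_neg_mul_Ioi {s : ℝ} (hs : 0 < s) :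
    ∫ w in Ioi (0:ℝ), Real.exp (-(s*w)) = 1/s := by
  have hderiv : ∀ w ∈ Ici (0:ℝ), HasDerivAt (fun w : ℝ => -Real.exp (-(s*w))/s)
      (Real.exp (-(s*w))) w := by
    intro w _
    have h1 : HasDerivAt (fun w : ℝ => -(s*w)) (-s) w := by
      simpa [Pi.neg_def] using ((hasDerivAt_id w).const_mul s).neg
    have h2 := (h1.exp).neg.div_const s
    refine h2.congr_deriv ?_
    field_simp
  have hint : IntegrableOn (fun w : ℝ => Real.exp (-(s*w))) (Ioi 0) := by
    have := exp_neg_integrableOn_Ioi 0 hs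
    simpa [neg_mul] using this
  have htend : Tendsto (fun w : ℝ => -Real.exp (-(s*w))/s) atTop (𝓝 0) := by
    have h1 : Tendsto (fun w : ℝ => s * w) atTop atTop :=
      Tendsto.const_mul_atTop hs tendsto_id
    have h2 : Tendsto (fun w : ℝ => Real.exp (-(s*w))) atTop (𝓝 0) := by
      exact Real.tendsto_exp_atBot.comp (tendsto_neg_atBot_iff.mpr h1)
    have := (h2.neg).div_const s
    simpa using this
  have := integral_Ioi_of_hasDerivAt_of_tendsto'
    (fun w hw => hderiv w hw) hint htend
  rw [this]
  simp [Real.exp_zero]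
  ring

lemma lintegral_exp_neg_mul_Ioi {s : ℝ} (hs : 0 < s) :
    ∫⁻ w in Ioi (0:ℝ), ENNReal.ofReal (Real.exp (-(s*w))) = ENNReal.ofReal (1/s) := by
  rw [← ofReal_integral_eq_lintegral_ofReal]
  · rw [integral_exp_neg_mul_Ioi hs]
  · have := exp_neg_integrableOn_Ioi 0 hs
    simpa [neg_mul, IntegrableOn] using this
  · exact Filter.Eventually.of_forall (fun w => (Real.exp_pos _).le)

lemma integral_exp_slice {w lam mu : ℝ} (hw : 0 < w) (hlm : lam ≤ mu) :
    ∫ s in Ioc lam mu, Real.exp (-(s*w)) = (Real.exp (-(lam*w)) - Real.exp (-(mu*w)))/w := by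
  rw [← intervalIntegral.integral_of_le hlm]
  have hderiv : ∀ s ∈ uIcc lam mu, HasDerivAt (fun s : ℝ => -Real.exp (-(s*w))/w)
      (Real.exp (-(s*w))) s := by
    intro s _
    have h1 : HasDerivAt (fun s : ℝ => -(s*w)) (-w) s := by
      simpa [Pi.neg_def] using ((hasDerivAt_id s).mul_const w).neg
    have h2 := (h1.exp).neg.div_const w
    refine h2.congr_deriv ?_
    field_simp
  have hcont : IntervalIntegrable (fun s : ℝ => Real.exp (-(s*w))) volume lam mu := by
    apply Continuous.intervalIntegrable
    exact Real.continuous_exp.comp (continuous_id.mul continuous_const).neg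
  rw [intervalIntegral.integral_eq_sub_of_hasDerivAt hderiv hcont]
  field_simp
  ring

lemma lintegral_frullani {lam mu : ℝ} (h0 : 0 < lam) (hlm : lam < mu) :
    ∫⁻ w in Ioi (0:ℝ), ENNReal.ofReal ((Real.exp (-(lam*w)) - Real.exp (-(mu*w)))/w)
      = ENNReal.ofReal (Real.log mu - Real.log lam) := by
  have hmeas : Measurable (Function.uncurry fun w s : ℝ => ENNReal.ofReal (Real.exp (-(s*w)))) := by
    apply Continuous.measurable
    exact ENNReal.continuous_ofReal.comp
      (Real.continuous_exp.comp ((continuous_snd.mul continuous_fst).neg))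
  have swap := lintegral_lintegral_swap (μ := volume.restrict (Ioi (0:ℝ)))
    (ν := volume.restrict (Ioc lam mu)) hmeas.aemeasurable
  have hconte : ∀ w : ℝ, Continuous (fun s : ℝ => Real.exp (-(s*w))) := fun w =>
    Real.continuous_exp.comp ((continuous_id.mul continuous_const).neg)
  have hL : ∫⁻ w in Ioi (0:ℝ), ∫⁻ s in Ioc lam mu, ENNReal.ofReal (Real.exp (-(s*w)))
      = ∫⁻ w in Ioi (0:ℝ), ENNReal.ofReal ((Real.exp (-(lam*w)) - Real.exp (-(mu*w)))/w) := by
    apply setLIntegral_congr_fun measurableSet_Ioi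
    intro w hw
    have hint : IntegrableOn (fun s : ℝ => Real.exp (-(s*w))) (Ioc lam mu) := by
      apply ((hconte w).continuousOn.integrableOn_compact isCompact_Icc).mono_set
        Ioc_subset_Icc_self
    beta_reduce
    rw [← ofReal_integral_eq_lintegral_ofReal hint
      (ae_of_all _ (fun s => (Real.exp_pos _).le)), integral_exp_slice hw hlm.le]
  have hR : ∫⁻ s in Ioc lam mu, ∫⁻ w in Ioi (0:ℝ), ENNReal.ofReal (Real.exp (-(s*w)))
      = ENNReal.ofReal (Real.log mu - Real.log lam) := by
    have h1 : ∫⁻ s in Ioc lam mu, ∫⁻ w in Ioi (0:ℝ), ENNReal.ofReal (Real.exp (-(s*w)))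
        = ∫⁻ s in Ioc lam mu, ENNReal.ofReal (1/s) := by
      apply setLIntegral_congr_fun measurableSet_Ioc
      intro s hs
      exact lintegral_exp_neg_mul_Ioi (h0.trans hs.1)
    rw [h1]
    have hint : IntegrableOn (fun s : ℝ => 1/s) (Ioc lam mu) := by
      apply (ContinuousOn.integrableOn_compact isCompact_Icc ?_).mono_set Ioc_subset_Icc_self
      apply ContinuousOn.div continuousOn_const continuousOn_id
      intro s hs
      exact (h0.trans_le hs.1).ne'
    rw [← ofReal_integral_eq_lintegral_ofReal hint]
    · congr 1
      rw [← intervalIntegral.integral_of_le hlm.le]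
      rw [integral_one_div]
      · rw [Real.log_div (h0.trans hlm).ne' h0.ne']
      · intro hmem
        rw [Set.uIcc_of_le hlm.le] at hmem
        exact absurd hmem.1 (not_le.mpr h0)
    · rw [EventuallyLE, ae_restrict_iff' measurableSet_Ioc]
      apply ae_of_all
      intro s hs
      have : 0 < s := h0.trans hs.1
      positivity
  rw [← hL, swap, hR]

lemma frullani_bochner {lam mu : ℝ} (h0 : 0 < lam) (hlm : lam < mu) :
    IntegrableOn (fun w => (Real.exp (-(lam*w)) - Real.exp (-(mu*w)))/w) (Ioi (0:ℝ)) ∧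
    ∫ w in Ioi (0:ℝ), (Real.exp (-(lam*w)) - Real.exp (-(mu*w)))/w
      = Real.log mu - Real.log lam := by
  set f := fun w => (Real.exp (-(lam*w)) - Real.exp (-(mu*w)))/w with hf
  have hmeas : Measurable f := by
    apply Measurable.div _ measurable_id
    apply Measurable.sub
    · exact Real.measurable_exp.comp ((measurable_const.mul measurable_id).neg)
    · exact Real.measurable_exp.comp ((measurable_const.mul measurable_id).neg)
  have hnn : 0 ≤ᵐ[volume.restrict (Ioi (0:ℝ))] f := by
    rw [EventuallyLE, ae_restrict_iff' measurableSet_Ioi]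
    apply ae_of_all
    intro w hw
    have hw' : (0:ℝ) < w := hw
    have : Real.exp (-(mu*w)) ≤ Real.exp (-(lam*w)) :=
      Real.exp_le_exp.mpr (by nlinarith)
    have : 0 ≤ Real.exp (-(lam*w)) - Real.exp (-(mu*w)) := by linarith
    positivity
  have hnorm : ∫⁻ w in Ioi (0:ℝ), ‖f w‖ₑ
      = ∫⁻ w in Ioi (0:ℝ), ENNReal.ofReal (f w) := by
    apply lintegral_congr_ae
    filter_upwards [hnn] with w hw
    exact Real.enorm_eq_ofReal hw
  have hfin : HasFiniteIntegral f (volume.restrict (Ioi (0:ℝ))) := by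
    rw [HasFiniteIntegral, hnorm, lintegral_frullani h0 hlm]
    exact ENNReal.ofReal_lt_top
  have hint : IntegrableOn f (Ioi (0:ℝ)) :=
    ⟨(hmeas.aestronglyMeasurable), hfin⟩
  refine ⟨hint, ?_⟩
  rw [integral_eq_lintegral_of_nonneg_ae hnn hmeas.aestronglyMeasurable,
    lintegral_frullani h0 hlm, ENNReal.toReal_ofReal]
  exact sub_nonneg.mpr (Real.log_le_log h0 hlm.le)

noncomputable def Afun (r : ℕ) (α : Fin (r+1) → ℝ) (ν : ℝ) (w : ℝ) : ℝ :=
  (r:ℝ) + Real.exp (-(ν*w)) - ∑ i, Real.exp (-(α i * w))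


lemma Afun_nonneg {r : ℕ} {α : Fin (r+1) → ℝ} {ν : ℝ} (hα : ∀ i, 0 < α i)
    (hν : ∑ i, α i = ν) {w : ℝ} (hw : 0 ≤ w) : 0 ≤ Afun r α ν w := by
  have key := one_sub_exp_sum w Finset.univ α
    (fun i _ => mul_nonneg (hα i).le hw)
  rw [hν] at key
  have h1 : ∑ i : Fin (r+1), (1 - Real.exp (-(α i * w)))
      = ((r:ℝ)+1) - ∑ i, Real.exp (-(α i * w)) := by
    rw [Finset.sum_sub_distrib]
    simp [Finset.card_univ]
  rw [h1] at key
  unfold Afun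
  linarith

lemma one_sub_exp_pos {a w : ℝ} (ha : 0 < a) (hw : 0 < w) :
    0 < 1 - Real.exp (-(a*w)) := by
  have : Real.exp (-(a*w)) < Real.exp 0 := Real.exp_lt_exp.mpr (by nlinarith)
  rw [Real.exp_zero] at this
  linarith

lemma Afun_pos {r : ℕ} (hr : 1 ≤ r) {α : Fin (r+1) → ℝ} {ν : ℝ} (hα : ∀ i, 0 < α i)
    (hν : ∑ i, α i = ν) {w : ℝ} (hw : 0 < w) : 0 < Afun r α ν w := by
  classical
  set s := ∑ i ∈ Finset.univ.erase (0 : Fin (r+1)), α i with hs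
  have hsplit : α 0 + s = ν := by
    rw [hs, Finset.add_sum_erase _ _ (Finset.mem_univ 0), hν]
  have hmem1 : (⟨1, by omega⟩ : Fin (r+1)) ∈ Finset.univ.erase (0 : Fin (r+1)) := by
    rw [Finset.mem_erase]
    exact ⟨Fin.ne_of_val_ne (by simp), Finset.mem_univ _⟩
  have hspos : 0 < s := Finset.sum_pos (fun i _ => hα i) ⟨_, hmem1⟩
  have hsub := one_sub_exp_sum w (Finset.univ.erase (0 : Fin (r+1))) α
    (fun i _ => mul_nonneg (hα i).le hw.le)
  rw [← hs] at hsub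
  have hA : Afun r α ν w
      = ((∑ i ∈ Finset.univ.erase (0 : Fin (r+1)), (1 - Real.exp (-(α i * w))))
          - (1 - Real.exp (-(s*w))))
        + (1 - Real.exp (-(α 0 * w))) * (1 - Real.exp (-(s * w))) := by
    unfold Afun
    have he : Real.exp (-(ν*w)) = Real.exp (-(α 0*w)) * Real.exp (-(s*w)) := by
      rw [← Real.exp_add]
      congr 1
      rw [← hsplit]
      ring
    have hsum_univ : ∑ i : Fin (r+1), Real.exp (-(α i * w))
        = Real.exp (-(α 0 * w)) + ∑ i ∈ Finset.univ.erase (0 : Fin (r+1)), Real.exp (-(α i * w)) :=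
      (Finset.add_sum_erase _ _ (Finset.mem_univ 0)).symm
    have hsum_erase : ∑ i ∈ Finset.univ.erase (0 : Fin (r+1)), (1 - Real.exp (-(α i * w)))
        = (r:ℝ) - ∑ i ∈ Finset.univ.erase (0 : Fin (r+1)), Real.exp (-(α i*w)) := by
      rw [Finset.sum_sub_distrib]
      simp [Finset.card_erase_of_mem, Finset.card_univ]
    rw [he, hsum_univ, hsum_erase]
    ring
  rw [hA]
  have h2 := mul_pos (one_sub_exp_pos (hα 0) hw) (one_sub_exp_pos hspos hw)
  linarith

lemma integral_G_exp {r : ℕ} {α : Fin (r+1) → ℝ} {ν lam : ℝ} (hα : ∀ i, 0 < α i)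
    (hν : ∑ i, α i = ν) (hlam : 0 < lam) :
    IntegrableOn (fun w => Afun r α ν w / w * Real.exp (-(lam*w))) (Ioi (0:ℝ)) ∧
    ∫ w in Ioi (0:ℝ), Afun r α ν w / w * Real.exp (-(lam*w))
      = (∑ i, (Real.log (lam + α i) - Real.log lam))
        - (Real.log (lam + ν) - Real.log lam) := by
  have hνpos : 0 < ν := by
    rw [← hν]; exact Finset.sum_pos (fun i _ => hα i) univ_nonempty
  set g : ℝ → ℝ → ℝ := fun β w => (Real.exp (-(lam*w)) - Real.exp (-((lam+β)*w)))/w with hg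
  have hEq : EqOn (fun w => (∑ i, g (α i) w) - g ν w)
      (fun w => Afun r α ν w / w * Real.exp (-(lam*w))) (Ioi 0) := by
    intro w hw
    have hw' : (0:ℝ) < w := hw
    simp only [hg, Afun]
    have he : ∀ β : ℝ, Real.exp (-((lam+β)*w)) = Real.exp (-(lam*w)) * Real.exp (-(β*w)) := by
      intro β
      rw [← Real.exp_add]
      congr 1
      ring
    simp only [he]
    rw [← Finset.sum_div, Finset.sum_sub_distrib, ← Finset.mul_sum]
    simp only [Finset.sum_const, Finset.card_univ, Fintype.card_fin, nsmul_eq_mul]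
    field_simp
    push_cast
    ring
  have hint_i : ∀ i : Fin (r+1), IntegrableOn (g (α i)) (Ioi (0:ℝ)) :=
    fun i => (frullani_bochner hlam (by have := hα i; linarith)).1
  have hint_ν : IntegrableOn (g ν) (Ioi (0:ℝ)) :=
    (frullani_bochner hlam (by linarith)).1
  have hint_sum : IntegrableOn (fun w => (∑ i, g (α i) w) - g ν w) (Ioi (0:ℝ)) :=
    (integrable_finset_sum _ (fun i _ => hint_i i)).sub hint_ν
  constructor
  · exact hint_sum.congr_fun hEq measurableSet_Ioi
  · rw [← setIntegral_congr_fun measurableSet_Ioi hEq]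
    rw [integral_sub (integrable_finset_sum _ (fun i _ => hint_i i)) hint_ν,
      integral_finset_sum _ (fun i _ => hint_i i)]
    have hvi : ∀ i : Fin (r+1), ∫ w in Ioi (0:ℝ), g (α i) w
        = Real.log (lam + α i) - Real.log lam :=
      fun i => (frullani_bochner hlam (by have := hα i; linarith)).2
    have hvν : ∫ w in Ioi (0:ℝ), g ν w = Real.log (lam + ν) - Real.log lam :=
      (frullani_bochner hlam (by linarith)).2
    rw [hvν, Finset.sum_congr rfl (fun i _ => hvi i)]

lemma geom_hasSum {t w : ℝ} (ht : 0 < t) (hw : 0 < w) :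
    HasSum (fun m : ℕ => Real.exp (-(((m:ℝ)+1)/t * w))) (1/(Real.exp (w/t) - 1)) := by
  set q := Real.exp (-(w/t)) with hq
  have hq0 : 0 ≤ q := (Real.exp_pos _).le
  have hq1 : q < 1 := by
    rw [hq, ← Real.exp_zero]
    apply Real.exp_lt_exp.mpr
    have : 0 < w/t := div_pos hw ht
    linarith
  have h := (hasSum_geometric_of_lt_one hq0 hq1).mul_left q
  have hE : (1:ℝ) < Real.exp (w/t) := by
    rw [← Real.exp_zero]
    exact Real.exp_lt_exp.mpr (div_pos hw ht)
  have hval : q * (1-q)⁻¹ = 1/(Real.exp (w/t) - 1) := by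
    rw [hq, Real.exp_neg]
    have h1 : Real.exp (w/t) ≠ 0 := (Real.exp_pos _).ne'
    have h2 : Real.exp (w/t) - 1 ≠ 0 := by linarith
    field_simp
  rw [hval] at h
  have hfun : (fun m : ℕ => Real.exp (-(((m:ℝ)+1)/t * w))) = fun m : ℕ => q * q^m := by
    funext m
    rw [hq, ← Real.exp_nat_mul, ← Real.exp_add]
    congr 1
    have ht' : t ≠ 0 := ht.ne'
    field_simp
    ring
  rw [hfun]
  exact h

lemma measurable_Gpart {r : ℕ} (α : Fin (r+1) → ℝ) (ν : ℝ) :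
    Measurable (fun w => Afun r α ν w / w) := by
  have hA : Continuous (Afun r α ν) := by
    apply Continuous.sub
    · exact continuous_const.add (Real.continuous_exp.comp (continuous_const.mul continuous_id).neg)
    · exact continuous_finset_sum _ (fun i _ =>
        Real.continuous_exp.comp (continuous_const.mul continuous_id).neg)
  exact hA.measurable.div measurable_id

lemma lintegral_key {r : ℕ} {α : Fin (r+1) → ℝ} {ν : ℝ} (hα : ∀ i, 0 < α i)
    (hν : ∑ i, α i = ν) {t : ℝ} (ht : 0 < t) :
    ∫⁻ w in Ioi (0:ℝ), ENNReal.ofReal (Afun r α ν w / w * (1/(Real.exp (w/t) - 1)))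
      = ENNReal.ofReal (Flog α ν t) := by
  have hstep1 : ∫⁻ w in Ioi (0:ℝ), ENNReal.ofReal (Afun r α ν w / w * (1/(Real.exp (w/t) - 1)))
      = ∫⁻ w in Ioi (0:ℝ), ∑' m : ℕ,
          ENNReal.ofReal (Afun r α ν w / w * Real.exp (-(((m:ℝ)+1)/t * w))) := by
    apply setLIntegral_congr_fun measurableSet_Ioi
    intro w hw
    have hw' : (0:ℝ) < w := hw
    have hG : 0 ≤ Afun r α ν w / w := div_nonneg (Afun_nonneg hα hν hw'.le) hw'.le
    have hgeo := (geom_hasSum ht hw').mul_left (Afun r α ν w / w)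
    beta_reduce
    rw [← hgeo.tsum_eq, ENNReal.ofReal_tsum_of_nonneg
      (fun m => mul_nonneg hG (Real.exp_pos _).le) hgeo.summable]
  have hmeasm : ∀ m : ℕ, AEMeasurable
      (fun w => ENNReal.ofReal (Afun r α ν w / w * Real.exp (-(((m:ℝ)+1)/t * w))))
      (volume.restrict (Ioi (0:ℝ))) := by
    intro m
    apply Measurable.aemeasurable
    apply Measurable.ennreal_ofReal
    apply Measurable.mul (measurable_Gpart α ν)
    exact Real.measurable_exp.comp (((measurable_id.const_mul (((m:ℝ)+1)/t))).neg)
  rw [hstep1, lintegral_tsum hmeasm]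
  have hstep2 : ∀ m : ℕ, ∫⁻ w in Ioi (0:ℝ),
      ENNReal.ofReal (Afun r α ν w / w * Real.exp (-(((m:ℝ)+1)/t * w)))
      = ENNReal.ofReal (eterm α ν t m) := by
    intro m
    have hlam : 0 < ((m:ℝ)+1)/t := by positivity
    have hig := integral_G_exp hα hν (lam := ((m:ℝ)+1)/t) hlam
    have hnn : 0 ≤ᵐ[volume.restrict (Ioi (0:ℝ))]
        (fun w => Afun r α ν w / w * Real.exp (-(((m:ℝ)+1)/t * w))) := by
      rw [EventuallyLE, ae_restrict_iff' measurableSet_Ioi]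
      apply ae_of_all
      intro w hw
      have hw' : (0:ℝ) < w := hw
      exact mul_nonneg (div_nonneg (Afun_nonneg hα hν hw'.le) hw'.le) (Real.exp_pos _).le
    rw [← ofReal_integral_eq_lintegral_ofReal hig.1 hnn, hig.2]
    congr 1
    have hlog : ∀ β : ℝ, 0 < β →
        Real.log (((m:ℝ)+1)/t + β) - Real.log (((m:ℝ)+1)/t)
          = Real.log (1 + t * β / ((m:ℝ)+1)) := by
      intro β hβ
      rw [← Real.log_div (by positivity) (by positivity)]
      congr 1
      have hm1 : ((m:ℝ)+1) ≠ 0 := by positivity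
      field_simp
    have hνpos : 0 < ν := by
      rw [← hν]; exact Finset.sum_pos (fun i _ => hα i) univ_nonempty
    unfold eterm
    rw [hlog ν hνpos, Finset.sum_congr rfl (fun i _ => hlog (α i) (hα i))]
  rw [tsum_congr hstep2, ← ENNReal.ofReal_tsum_of_nonneg
    (fun m => eterm_nonneg hα hν ht m) (hasSum_eterm hα hν ht).summable,
    (hasSum_eterm hα hν ht).tsum_eq]

lemma Flog_nonneg {r : ℕ} {α : Fin (r+1) → ℝ} {ν t : ℝ}
    (hα : ∀ i, 0 < α i) (hν : ∑ i, α i = ν) (ht : 0 < t) : 0 ≤ Flog α ν t := by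
  rw [← (hasSum_eterm hα hν ht).tsum_eq]
  exact tsum_nonneg (eterm_nonneg hα hν ht)

lemma measurable_H (t : ℝ) : Measurable (fun w : ℝ => 1/(Real.exp (w/t) - 1)) :=
  measurable_const.div ((Real.measurable_exp.comp (measurable_id.div_const t)).sub
    measurable_const)

lemma Flog_superadd {r : ℕ} (hr : 1 ≤ r) {α : Fin (r+1) → ℝ} {ν : ℝ}
    (hα : ∀ i, 0 < α i) (hν : ∑ i, α i = ν) {x y : ℝ} (hx : 0 < x) (hy : 0 < y) :
    Flog α ν x + Flog α ν y < Flog α ν (x+y) := by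
  have hxy : 0 < x + y := by linarith
  set G : ℝ → ℝ := fun w => Afun r α ν w / w with hG
  set H : ℝ → ℝ → ℝ := fun t w => 1/(Real.exp (w/t) - 1) with hH
  set δ : ℝ → ℝ := fun w => H (x+y) w - H x w - H y w with hδ
  have hmGH : ∀ t : ℝ, Measurable (fun w => ENNReal.ofReal (G w * H t w)) :=
    fun t => ((measurable_Gpart α ν).mul (measurable_H t)).ennreal_ofReal
  have hmGδ : Measurable (fun w => ENNReal.ofReal (G w * δ w)) := by
    apply Measurable.ennreal_ofReal
    exact (measurable_Gpart α ν).mul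
      (((measurable_H (x+y)).sub (measurable_H x)).sub (measurable_H y))
  have hHnn : ∀ t w : ℝ, 0 < t → 0 < w → 0 ≤ H t w := by
    intro t w ht hw
    have := exp_sub_one_pos (div_pos hw ht)
    simp only [hH]
    positivity
  -- pointwise splitting
  have hpt : EqOn (fun w => ENNReal.ofReal (G w * H (x+y) w))
      (fun w => ENNReal.ofReal (G w * H x w) + ENNReal.ofReal (G w * H y w)
        + ENNReal.ofReal (G w * δ w)) (Ioi 0) := by
    intro w hw
    have hw' : (0:ℝ) < w := hw
    have hGnn : 0 ≤ G w := div_nonneg (Afun_nonneg hα hν hw'.le) hw'.le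
    have hδnn : 0 ≤ δ w := by
      have := H_superadd hw' hx hy
      simp only [hδ, hH]
      linarith
    have hid : G w * H (x+y) w = (G w * H x w + G w * H y w) + G w * δ w := by
      simp only [hδ]; ring
    simp only []
    rw [hid, ENNReal.ofReal_add (add_nonneg (mul_nonneg hGnn (hHnn x w hx hw'))
        (mul_nonneg hGnn (hHnn y w hy hw'))) (mul_nonneg hGnn hδnn),
      ENNReal.ofReal_add (mul_nonneg hGnn (hHnn x w hx hw'))
        (mul_nonneg hGnn (hHnn y w hy hw'))]
  have hsplit : ENNReal.ofReal (Flog α ν (x+y))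
      = ENNReal.ofReal (Flog α ν x) + ENNReal.ofReal (Flog α ν y)
        + ∫⁻ w in Ioi (0:ℝ), ENNReal.ofReal (G w * δ w) := by
    rw [← lintegral_key hα hν hxy, ← lintegral_key hα hν hx, ← lintegral_key hα hν hy]
    rw [setLIntegral_congr_fun measurableSet_Ioi hpt]
    rw [lintegral_add_left (f := fun w => ENNReal.ofReal (G w * H x w) + ENNReal.ofReal (G w * H y w))
      ((hmGH x).add (hmGH y)), lintegral_add_left (hmGH x)]
  have hpos : 0 < ∫⁻ w in Ioi (0:ℝ), ENNReal.ofReal (G w * δ w) := by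
    refine zero_le'.lt_of_ne (fun h0 => ?_)
    · exfalso
      have h0' := ((lintegral_eq_zero_iff hmGδ).mp h0.symm)
      rw [Filter.EventuallyEq, ae_restrict_iff' measurableSet_Ioi] at h0'
      have hcontra : ∀ᵐ w : ℝ, ¬ (w ∈ Ioi (0:ℝ)) := by
        filter_upwards [h0'] with w hw hmem
        have hw' : (0:ℝ) < w := hmem
        have hGpos : 0 < G w := div_pos (Afun_pos hr hα hν hw') hw'
        have hδpos : 0 < δ w := by
          have := H_superadd hw' hx hy
          simp only [hδ, hH]
          linarith
        have := hw hmem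
        rw [Pi.zero_apply, ENNReal.ofReal_eq_zero] at this
        nlinarith
      rw [ae_iff] at hcontra
      simp only [not_not] at hcontra
      rw [show {w : ℝ | w ∈ Ioi (0:ℝ)} = Ioi (0:ℝ) from rfl, Real.volume_Ioi] at hcontra
      exact ENNReal.top_ne_zero hcontra
  have hfin : ENNReal.ofReal (Flog α ν x) + ENNReal.ofReal (Flog α ν y) ≠ ⊤ := by
    finiteness
  have hlt : ENNReal.ofReal (Flog α ν x) + ENNReal.ofReal (Flog α ν y)
      < ENNReal.ofReal (Flog α ν (x+y)) := by
    rw [hsplit]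
    exact ENNReal.lt_add_right hfin hpos.ne'
  rw [← ENNReal.ofReal_add (Flog_nonneg hα hν hx) (Flog_nonneg hα hν hy)] at hlt
  exact (ENNReal.ofReal_lt_ofReal_iff_of_nonneg
    (add_nonneg (Flog_nonneg hα hν hx) (Flog_nonneg hα hν hy))).mp hlt

lemma Flog_sum_le {r : ℕ} (hr : 1 ≤ r) {α : Fin (r+1) → ℝ} {ν : ℝ}
    (hα : ∀ i, 0 < α i) (hν : ∑ i, α i = ν) :
    ∀ ℓ : ℕ, 1 ≤ ℓ → ∀ x : Fin ℓ → ℝ, (∀ k, 0 < x k) →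
      ∑ k, Flog α ν (x k) ≤ Flog α ν (∑ k, x k) := by
  intro ℓ hℓ'
  induction ℓ, hℓ' using Nat.le_induction with
  | base =>
    intro x hx
    simp [Fin.sum_univ_one]
  | succ ℓ hℓ ih =>
    intro x hx
    rw [Fin.sum_univ_castSucc (f := fun k => Flog α ν (x k)),
      Fin.sum_univ_castSucc (f := x)]
    have hpos : 0 < ∑ k : Fin ℓ, x k.castSucc :=
      Finset.sum_pos (fun k _ => hx _) (by
        have : Nonempty (Fin ℓ) := ⟨⟨0, by omega⟩⟩
        exact Finset.univ_nonempty)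
    calc (∑ k : Fin ℓ, Flog α ν (x k.castSucc)) + Flog α ν (x (Fin.last ℓ))
        ≤ Flog α ν (∑ k : Fin ℓ, x k.castSucc) + Flog α ν (x (Fin.last ℓ)) := by
          have := ih (fun k => x k.castSucc) (fun k => hx _)
          linarith
      _ ≤ Flog α ν ((∑ k : Fin ℓ, x k.castSucc) + x (Fin.last ℓ)) :=
          (Flog_superadd hr hα hν hpos (hx _)).le

lemma Flog_sum_lt {r : ℕ} (hr : 1 ≤ r) {α : Fin (r+1) → ℝ} {ν : ℝ}
    (hα : ∀ i, 0 < α i) (hν : ∑ i, α i = ν)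
    {ℓ : ℕ} (hℓ : 2 ≤ ℓ) (x : Fin ℓ → ℝ) (hx : ∀ k, 0 < x k) :
    ∑ k, Flog α ν (x k) < Flog α ν (∑ k, x k) := by
  obtain ⟨m, rfl⟩ : ∃ m, ℓ = m + 1 := ⟨ℓ - 1, by omega⟩
  have hm : 1 ≤ m := by omega
  rw [Fin.sum_univ_castSucc (f := fun k => Flog α ν (x k)),
    Fin.sum_univ_castSucc (f := x)]
  have hpos : 0 < ∑ k : Fin m, x k.castSucc :=
    Finset.sum_pos (fun k _ => hx _) (by
      have : Nonempty (Fin m) := ⟨⟨0, by omega⟩⟩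
      exact Finset.univ_nonempty)
  calc (∑ k : Fin m, Flog α ν (x k.castSucc)) + Flog α ν (x (Fin.last m))
      ≤ Flog α ν (∑ k : Fin m, x k.castSucc) + Flog α ν (x (Fin.last m)) := by
        have := Flog_sum_le hr hα hν m hm (fun k => x k.castSucc) (fun k => hx _)
        linarith
    _ < Flog α ν ((∑ k : Fin m, x k.castSucc) + x (Fin.last m)) :=
        Flog_superadd hr hα hν hpos (hx _)


end Stmt17

theorem stmt17 (n r : ℕ) (hn : 1 ≤ n) (hr : 1 ≤ r)
    (α : Fin (r + 1) → ℝ) (hα : ∀ i, 0 < α i) (hsum : ∑ i, α i = n)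
    (Q : ℝ → ℝ) (hQ : ∀ x, Q x = Real.Gamma (x * n + 1) / ∏ i, Real.Gamma (x * α i + 1))
    (ℓ : ℕ) (hℓ : 2 ≤ ℓ) (x : Fin ℓ → ℝ) (hx : ∀ k, 0 < x k) :
    ∏ k, Q (x k) < Q (∑ k, x k) := by
  have hνpos : (0:ℝ) < (n:ℝ) := by exact_mod_cast hn
  have hQpos : ∀ t : ℝ, 0 < t → 0 < Q t := by
    intro t ht
    rw [hQ t]
    apply div_pos
    · apply Real.Gamma_pos_of_pos; positivity
    · exact Finset.prod_pos (fun i _ => Real.Gamma_pos_of_pos (by have := hα i; positivity))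
  have hlogQ : ∀ t : ℝ, 0 < t → Real.log (Q t) = Stmt17.Flog α (n:ℝ) t := by
    intro t ht
    rw [hQ t, Real.log_div (Real.Gamma_pos_of_pos (by positivity)).ne'
      (Finset.prod_pos (fun i _ => Real.Gamma_pos_of_pos (by have := hα i; positivity))).ne',
      Real.log_prod (fun i _ => (Real.Gamma_pos_of_pos (by have := hα i; positivity)).ne')]
    rfl
  have hFin : Nonempty (Fin ℓ) := ⟨⟨0, by omega⟩⟩
  have hsumx : 0 < ∑ k, x k := Finset.sum_pos (fun k _ => hx k) Finset.univ_nonempty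
  have key := Stmt17.Flog_sum_lt hr hα hsum hℓ x hx
  have h1 : Real.log (∏ k, Q (x k)) = ∑ k, Stmt17.Flog α (n:ℝ) (x k) := by
    rw [Real.log_prod (fun k _ => (hQpos _ (hx k)).ne')]
    exact Finset.sum_congr rfl (fun k _ => hlogQ _ (hx k))
  have h2 : Real.log (Q (∑ k, x k)) = Stmt17.Flog α (n:ℝ) (∑ k, x k) := hlogQ _ hsumx
  have hlt : Real.log (∏ k, Q (x k)) < Real.log (Q (∑ k, x k)) := by
    rw [h1, h2]; exact key
  have hprodpos : 0 < ∏ k, Q (x k) := Finset.prod_pos (fun k _ => hQpos _ (hx k))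
  calc ∏ k, Q (x k) = Real.exp (Real.log (∏ k, Q (x k))) := (Real.exp_log hprodpos).symm
    _ < Real.exp (Real.log (Q (∑ k, x k))) := Real.exp_lt_exp.mpr hlt
    _ = Q (∑ k, x k) := Real.exp_log (hQpos _ hsumx)
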